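/- arXiv:2408.05458 — 10 statements merged into one kernel-verified Lean document; each statement's English description precedes it below -/
import Mathlib

section
/- Let K be a field and A, B, C vector spaces over K. Let v ∈ (A ⊗[K] B) ⊗[K] C. Suppose that v = γ ⊗ₜ c for some γ ∈ A ⊗ B and c ∈ C, and that the image of v under the associator isomorphism (A ⊗ B) ⊗ C ≃ A ⊗ (B ⊗ C) equals a ⊗ₜ α for some a ∈ A and α ∈ B ⊗ C. Then there exists b ∈ B with v = (a ⊗ₜ b) ⊗ₜ c. -/
open TensorProduct

/-- If a vector of `(A ⊗ B) ⊗ C` is a pure tensor both for the decomposition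
`(A ⊗ B) ⊗ C` (with last factor `c`) and, via the associator, for the
decomposition `A ⊗ (B ⊗ C)` (with first factor `a`), then it is a pure tensor
`(a ⊗ b) ⊗ c` for the three-factor decomposition. -/
theorem pure_tensor_of_two_decompositions {K : Type*} [Field K]
    {A B C : Type*} [AddCommGroup A] [Module K A] [AddCommGroup B] [Module K B]
    [AddCommGroup C] [Module K C]
    (v : (A ⊗[K] B) ⊗[K] C) (γ : A ⊗[K] B) (c : C) (a : A) (α : B ⊗[K] C)
    (h₁ : v = γ ⊗ₜ[K] c)
    (h₂ : TensorProduct.assoc K A B C v = a ⊗ₜ[K] α) :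
    ∃ b : B, v = (a ⊗ₜ[K] b) ⊗ₜ[K] c := by
  by_cases hc : c = 0
  · exact ⟨0, by simp [h₁, hc]⟩
  · -- find φ : C →ₗ[K] K with φ c = 1
    have : ¬ (∀ φ : Module.Dual K C, φ c = 0) := by
      rw [Module.forall_dual_apply_eq_zero_iff]; exact hc
    push_neg at this
    obtain ⟨φ₀, hφ₀⟩ := this
    set φ : C →ₗ[K] K := (φ₀ c)⁻¹ • φ₀ with hφ
    have hφc : φ c = 1 := by simp [hφ, inv_mul_cancel₀ hφ₀]
    set f : B ⊗[K] C →ₗ[K] B :=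
      (TensorProduct.rid K B).toLinearMap ∘ₗ LinearMap.lTensor B φ with hf
    set G : (A ⊗[K] B) ⊗[K] C →ₗ[K] A ⊗[K] B :=
      (TensorProduct.rid K (A ⊗[K] B)).toLinearMap ∘ₗ LinearMap.lTensor (A ⊗[K] B) φ with hG
    have key : G = (LinearMap.lTensor A f) ∘ₗ (TensorProduct.assoc K A B C).toLinearMap := by
      ext x y z
      simp [hG, hf, TensorProduct.smul_tmul']
    have hGv : G v = γ := by
      simp [h₁, hG, hφc]
    have hGv' : G v = a ⊗ₜ[K] (f α) := by
      rw [key]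
      simp only [LinearMap.coe_comp, Function.comp_apply, LinearEquiv.coe_coe]
      rw [h₂]
      simp
    refine ⟨f α, ?_⟩
    rw [h₁, ← hGv, hGv']
end

section
/- Let D be a type and X, Y, U, V : Finset D. Then the indicator functions satisfy 1_X(p) + 1_Y(p) = 1_U(p) + 1_V(p) for every p ∈ D (equivalently, X + Y = U + V in ℕ[D]) if and only if there exists a subset C ⊆ D (a Finset contained in X ∪ Y ∪ U ∪ V suffices) such that U = (X \ C) ∪ (Y ∩ C) and V = (Y \ C) ∪ (X ∩ C). Moreover, in the forward direction one may take C = (X \ U) ∪ (U \ X). -/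
lemma exchange_aux {D : Type*} [DecidableEq D] (X Y U V : Finset D)
    (h : ∀ p : D, ((if p ∈ X then 1 else 0) + (if p ∈ Y then 1 else 0) : ℕ)
        = (if p ∈ U then 1 else 0) + (if p ∈ V then 1 else 0)) :
    U = (X \ ((X \ U) ∪ (U \ X))) ∪ (Y ∩ ((X \ U) ∪ (U \ X))) ∧
      V = (Y \ ((X \ U) ∪ (U \ X))) ∪ (X ∩ ((X \ U) ∪ (U \ X))) := by
  constructor <;>
  · ext p
    have hp := h p
    simp only [Finset.mem_union, Finset.mem_sdiff, Finset.mem_inter]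
    by_cases hX : p ∈ X <;> by_cases hY : p ∈ Y <;> by_cases hU : p ∈ U <;>
      by_cases hV : p ∈ V <;> simp_all

/-- The indicator-sum equation `1_X + 1_Y = 1_U + 1_V` in `ℕ[D]` holds iff
`(U, V)` is obtained from `(X, Y)` by exchanging the values on some subset `C`
(which can be taken inside `X ∪ Y ∪ U ∪ V`); moreover in the forward direction
one may take `C = (X \ U) ∪ (U \ X)`. -/
theorem indicator_sum_eq_iff_exchange {D : Type*} [DecidableEq D]
    (X Y U V : Finset D) :
    (((∀ p : D, ((if p ∈ X then 1 else 0) + (if p ∈ Y then 1 else 0) : ℕ)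
          = (if p ∈ U then 1 else 0) + (if p ∈ V then 1 else 0)) ↔
        ∃ C : Finset D, C ⊆ X ∪ Y ∪ U ∪ V ∧
          U = (X \ C) ∪ (Y ∩ C) ∧ V = (Y \ C) ∪ (X ∩ C))) ∧
      ((∀ p : D, ((if p ∈ X then 1 else 0) + (if p ∈ Y then 1 else 0) : ℕ)
          = (if p ∈ U then 1 else 0) + (if p ∈ V then 1 else 0)) →
        U = (X \ ((X \ U) ∪ (U \ X))) ∪ (Y ∩ ((X \ U) ∪ (U \ X))) ∧
          V = (Y \ ((X \ U) ∪ (U \ X))) ∪ (X ∩ ((X \ U) ∪ (U \ X)))) := by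
  refine ⟨⟨fun h => ?_, ?_⟩, exchange_aux X Y U V⟩
  · refine ⟨(X \ U) ∪ (U \ X), ?_, exchange_aux X Y U V h⟩
    intro p hp
    simp only [Finset.mem_union, Finset.mem_sdiff] at hp ⊢
    tauto
  · rintro ⟨C, hC, hU, hV⟩ p
    subst hU hV
    simp only [Finset.mem_union, Finset.mem_sdiff, Finset.mem_inter]
    by_cases hX : p ∈ X <;> by_cases hY : p ∈ Y <;> by_cases hCp : p ∈ C <;> simp_all
end

section
/- Let R be a commutative ring, n k : ℕ with k ≤ n, and let S = {i : Fin n | (i : ℕ) < k} (as a Finset) with complement Sᶜ. If φ ∈ MvPolynomial (Fin n) R satisfies rename e φ = φ for every permutation e of Fin n mapping S onto S, then φ belongs to the R-subalgebra of MvPolynomial (Fin n) R generated by the elements e_1(S), …, e_k(S), e_1(Sᶜ), …, e_{n−k}(Sᶜ). -/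
/-- The elementary symmetric polynomial `e_l(S) = Σ_{T ⊆ S, #T = l} ∏_{i ∈ T} X_i`
in the variables of a Finset `S`. -/
noncomputable def esymmOn {σ : Type*} (R : Type*) [CommRing R]
    (S : Finset σ) (l : ℕ) : MvPolynomial σ R :=
  ∑ T ∈ S.powersetCard l, ∏ i ∈ T, MvPolynomial.X i

open MvPolynomial Finset

lemma rename_esymm_map {σ τ : Type*} (R : Type*) [CommRing R] [Fintype σ]
    (f : σ ↪ τ) (l : ℕ) :
    rename f (esymm σ R l) = esymmOn R (Finset.univ.map f) l := by
  rw [esymm, map_sum, esymmOn, Finset.powersetCard_map, Finset.sum_map]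
  refine Finset.sum_congr rfl fun T _ => ?_
  rw [map_prod]
  rw [show ((mapEmbedding f).toEmbedding T) = T.map f from rfl, Finset.prod_map]
  simp

lemma sumAlgEquiv_rename_inr {R σ τ : Type*} [CommRing R] (e₂ : Equiv.Perm τ)
    (p : MvPolynomial (σ ⊕ τ) R) :
    sumAlgEquiv R σ τ (rename (Equiv.sumCongr (1 : Equiv.Perm σ) e₂) p)
      = MvPolynomial.map (rename e₂ : MvPolynomial τ R →ₐ[R] MvPolynomial τ R).toRingHom
          (sumAlgEquiv R σ τ p) := by
  have h : ((sumAlgEquiv R σ τ).toAlgHom.comp (rename ⇑(Equiv.sumCongr (1 : Equiv.Perm σ) e₂)))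
      = (mapAlgHom (rename e₂)).comp (sumAlgEquiv R σ τ).toAlgHom := by
    ext (i | j) <;> simp
  exact congrFun (congrArg DFunLike.coe h) p

lemma sumAlgEquiv_rename_inl {R σ τ : Type*} [CommRing R] (e₁ : Equiv.Perm σ)
    (p : MvPolynomial (σ ⊕ τ) R) :
    sumAlgEquiv R σ τ (rename (Equiv.sumCongr e₁ (1 : Equiv.Perm τ)) p)
      = rename e₁ (sumAlgEquiv R σ τ p) := by
  have h : ((sumAlgEquiv R σ τ).toAlgHom.comp (rename ⇑(Equiv.sumCongr e₁ (1 : Equiv.Perm τ))))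
      = (AlgHom.restrictScalars R (rename (R := MvPolynomial τ R) ⇑e₁)).comp
          (sumAlgEquiv R σ τ).toAlgHom := by
    ext (i | j) <;> simp
  exact congrFun (congrArg DFunLike.coe h) p

lemma sumAlgEquiv_symm_C {R σ τ : Type*} [CommRing R] (a : MvPolynomial τ R) :
    (sumAlgEquiv R σ τ).symm (C a) = rename Sum.inr a := by
  apply (sumAlgEquiv R σ τ).injective
  rw [AlgEquiv.apply_symm_apply]
  have := congrFun (congrArg DFunLike.coe (sumAlgEquiv_comp_rename_inr R σ τ)) a
  simp only [AlgHom.coe_comp, Function.comp_apply, AlgEquiv.toAlgHom_eq_coe, AlgHom.coe_coe] at this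
  rw [show (sumAlgEquiv R σ τ) ((rename Sum.inr) a) = _ from this]
  rfl

lemma sumAlgEquiv_symm_esymm {R : Type*} [CommRing R] {σ τ : Type*} [Fintype σ] (l : ℕ) :
    (sumAlgEquiv R σ τ).symm (esymm σ (MvPolynomial τ R) l)
      = rename Sum.inl (esymm σ R l) := by
  apply (sumAlgEquiv R σ τ).injective
  rw [AlgEquiv.apply_symm_apply]
  have := congrFun (congrArg DFunLike.coe (sumAlgEquiv_comp_rename_inl R σ τ)) (esymm σ R l)
  simp only [AlgHom.coe_comp, Function.comp_apply, AlgEquiv.toAlgHom_eq_coe, AlgHom.coe_coe] at this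
  rw [show (sumAlgEquiv R σ τ) ((rename Sum.inl) (esymm σ R l)) = _ from this]
  show _ = MvPolynomial.map (C : R →+* MvPolynomial τ R) (esymm σ R l)
  rw [map_esymm]

open Equiv in
set_option synthInstance.maxHeartbeats 1000000 in
set_option maxHeartbeats 1600000 in
lemma key {R : Type*} [CommRing R] (k m : ℕ) (ψ : MvPolynomial (Fin k ⊕ Fin m) R)
    (hψ : ∀ (e₁ : Equiv.Perm (Fin k)) (e₂ : Equiv.Perm (Fin m)),
      rename ⇑(Equiv.sumCongr e₁ e₂) ψ = ψ) :
    ∃ q : MvPolynomial (Fin k ⊕ Fin m) R,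
      aeval (Sum.elim
        (fun l : Fin k => rename (Sum.inl : Fin k → Fin k ⊕ Fin m) (esymm (Fin k) R (l + 1)))
        (fun j : Fin m => rename (Sum.inr : Fin m → Fin k ⊕ Fin m) (esymm (Fin m) R (j + 1)))) q
        = ψ := by
  classical
  set B := symmetricSubalgebra (Fin m) R with hB
  set T := sumAlgEquiv R (Fin k) (Fin m) with hT
  set G : Fin k ⊕ Fin m → MvPolynomial (Fin k ⊕ Fin m) R := Sum.elim
        (fun l : Fin k => rename (Sum.inl : Fin k → Fin k ⊕ Fin m) (esymm (Fin k) R (l + 1)))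
        (fun j : Fin m => rename (Sum.inr : Fin m → Fin k ⊕ Fin m) (esymm (Fin m) R (j + 1)))
    with hG
  set χ := T ψ with hχ
  have hcoeff : ∀ d : Fin k →₀ ℕ, coeff d χ ∈ B := by
    intro d
    rw [hB, mem_symmetricSubalgebra]
    intro e₂
    have h1 := sumAlgEquiv_rename_inr e₂ ψ
    rw [hψ 1 e₂] at h1
    have h2 := congrArg (coeff d) h1
    rw [coeff_map] at h2
    exact h2.symm
  set χ' : MvPolynomial (Fin k) B :=
    ∑ d ∈ χ.support, monomial d (⟨coeff d χ, hcoeff d⟩ : B) with hχ'def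
  have hχ' : MvPolynomial.map (Subalgebra.val B).toRingHom χ' = χ := by
    rw [hχ'def, map_sum]
    simp only [map_monomial]
    exact (χ.as_sum).symm
  have hval_inj : Function.Injective ⇑(Subalgebra.val B).toRingHom := Subtype.val_injective
  have hsym : χ' ∈ symmetricSubalgebra (Fin k) B := by
    rw [mem_symmetricSubalgebra]
    intro e₁
    apply MvPolynomial.map_injective _ hval_inj
    rw [map_rename, hχ']
    have h2 := sumAlgEquiv_rename_inl (τ := Fin m) e₁ ψ
    rw [hψ e₁ 1] at h2
    exact h2.symm
  obtain ⟨q₁, hq₁⟩ := (esymmAlgHom_fin_bijective B k).2 ⟨χ', hsym⟩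
  have hq₁' : aeval (fun i : Fin k => esymm (Fin k) B ((i : ℕ) + 1)) q₁ = χ' := by
    have := congrArg Subtype.val hq₁
    rwa [esymmAlgHom_apply] at this
  choose c hc using (esymmAlgHom_fin_bijective R m).2
  have hc' : ∀ b : B, aeval (fun j : Fin m => esymm (Fin m) R ((j : ℕ) + 1)) (c b) = (b : MvPolynomial (Fin m) R) := by
    intro b
    have := congrArg Subtype.val (hc b)
    rwa [esymmAlgHom_apply] at this
  refine ⟨∑ d ∈ q₁.support,
    rename Sum.inl (monomial d (1 : R)) * rename Sum.inr (c (coeff d q₁)), ?_⟩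
  have Fl : ∀ p : MvPolynomial (Fin k) R, aeval G (rename Sum.inl p)
      = rename Sum.inl (aeval (fun i : Fin k => esymm (Fin k) R ((i : ℕ) + 1)) p) := by
    intro p
    rw [aeval_rename, comp_aeval_apply]
    rfl
  have Fr : ∀ p : MvPolynomial (Fin m) R, aeval G (rename Sum.inr p)
      = rename Sum.inr (aeval (fun j : Fin m => esymm (Fin m) R ((j : ℕ) + 1)) p) := by
    intro p
    rw [aeval_rename, comp_aeval_apply]
    rfl
  have step : ∀ d ∈ q₁.support,
      aeval G (rename Sum.inl (monomial d (1 : R)) * rename Sum.inr (c (coeff d q₁)))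
        = T.symm (MvPolynomial.map (Subalgebra.val B).toRingHom
            (aeval (fun i : Fin k => esymm (Fin k) B ((i : ℕ) + 1))
              (monomial d (coeff d q₁)))) := by
    intro d _
    rw [map_mul, Fl, Fr, hc']
    rw [aeval_monomial, aeval_monomial]
    simp only [map_one, one_mul, map_mul]
    have hmap1 : MvPolynomial.map (Subalgebra.val B).toRingHom
        (algebraMap B (MvPolynomial (Fin k) B) (coeff d q₁)) = C ((Subalgebra.val B) (coeff d q₁)) := by
      rw [MvPolynomial.algebraMap_eq, map_C]
      rfl
    have hmap2 : MvPolynomial.map (Subalgebra.val B).toRingHom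
        (d.prod fun i e => esymm (Fin k) B ((i : ℕ) + 1) ^ e)
          = d.prod fun i e => esymm (Fin k) (MvPolynomial (Fin m) R) ((i : ℕ) + 1) ^ e := by
      rw [Finsupp.prod, Finsupp.prod, map_prod]
      exact Finset.prod_congr rfl fun i _ => by rw [map_pow, map_esymm]
    have hmap3 : T.symm (d.prod fun i e => esymm (Fin k) (MvPolynomial (Fin m) R) ((i : ℕ) + 1) ^ e)
        = rename Sum.inl (d.prod fun i e => esymm (Fin k) R ((i : ℕ) + 1) ^ e) := by
      rw [Finsupp.prod, Finsupp.prod, map_prod, map_prod]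
      exact Finset.prod_congr rfl fun i _ => by rw [map_pow, map_pow, sumAlgEquiv_symm_esymm]
    rw [hmap1, hmap2, sumAlgEquiv_symm_C, hmap3]
    exact mul_comm _ _
  rw [map_sum, Finset.sum_congr rfl step, ← map_sum, ← map_sum, ← map_sum]
  rw [← as_sum, hq₁', hχ']
  rw [hχ, AlgEquiv.symm_apply_apply]

open Equiv

/-- A polynomial invariant under all permutations of `Fin n` mapping
`S = {i | i < k}` onto itself lies in the subalgebra generated by
`e_1(S), …, e_k(S), e_1(Sᶜ), …, e_{n-k}(Sᶜ)`. -/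
theorem invariant_mem_adjoin_esymmOn {R : Type*} [CommRing R] {n k : ℕ}
    (hk : k ≤ n) (φ : MvPolynomial (Fin n) R)
    (hφ : ∀ e : Equiv.Perm (Fin n),
      Finset.image e ({i : Fin n | (i : ℕ) < k} : Finset (Fin n))
          = ({i : Fin n | (i : ℕ) < k} : Finset (Fin n)) →
      MvPolynomial.rename e φ = φ) :
    φ ∈ Algebra.adjoin R
      (Set.range (fun l : Fin k =>
          esymmOn R ({i : Fin n | (i : ℕ) < k} : Finset (Fin n)) ((l : ℕ) + 1)) ∪
        Set.range (fun j : Fin (n - k) =>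
          esymmOn R (({i : Fin n | (i : ℕ) < k} : Finset (Fin n))ᶜ) ((j : ℕ) + 1))) := by
  classical
  have h : k + (n - k) = n := Nat.add_sub_cancel' hk
  set ι : Fin k ⊕ Fin (n - k) ≃ Fin n := finSumFinEquiv.trans (finCongr h) with hι
  set S : Finset (Fin n) := ({i : Fin n | (i : ℕ) < k} : Finset (Fin n)) with hSdef
  have hval_l : ∀ i : Fin k, ((ι (Sum.inl i)) : ℕ) = (i : ℕ) := by
    intro i; simp [hι]
  have hval_r : ∀ j : Fin (n - k), ((ι (Sum.inr j)) : ℕ) = k + (j : ℕ) := by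
    intro j; simp [hι]
  let fl : Fin k ↪ Fin n := ⟨fun i => ι (Sum.inl i), ι.injective.comp Sum.inl_injective⟩
  let fr : Fin (n - k) ↪ Fin n := ⟨fun j => ι (Sum.inr j), ι.injective.comp Sum.inr_injective⟩
  have hmemS : ∀ x : Fin n, x ∈ S ↔ (x : ℕ) < k := by
    intro x; rw [hSdef]; simp
  have hSl : S = Finset.univ.map fl := by
    ext x
    rw [hmemS, Finset.mem_map]
    constructor
    · intro hx
      exact ⟨⟨(x : ℕ), hx⟩, Finset.mem_univ _, Fin.ext (hval_l ⟨(x : ℕ), hx⟩)⟩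
    · rintro ⟨i, -, rfl⟩
      show ((ι (Sum.inl i)) : ℕ) < k
      rw [hval_l]; exact i.2
  have hSr : Sᶜ = Finset.univ.map fr := by
    ext x
    rw [Finset.mem_compl, hmemS, Finset.mem_map]
    constructor
    · intro hx
      push_neg at hx
      refine ⟨⟨(x : ℕ) - k, by omega⟩, Finset.mem_univ _, Fin.ext ?_⟩
      show ((ι (Sum.inr _)) : ℕ) = (x : ℕ)
      rw [hval_r]; simp; omega
    · rintro ⟨j, -, rfl⟩
      show ¬ ((ι (Sum.inr j)) : ℕ) < k
      rw [hval_r]; omega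
  set ψ : MvPolynomial (Fin k ⊕ Fin (n - k)) R := rename ⇑ι.symm φ with hψdef
  have hψinv : ∀ (e₁ : Perm (Fin k)) (e₂ : Perm (Fin (n - k))),
      rename ⇑(sumCongr e₁ e₂) ψ = ψ := by
    intro e₁ e₂
    set e : Perm (Fin n) := ι.permCongr (sumCongr e₁ e₂) with he
    have hperm : Finset.image ⇑e S = S := by
      rw [hSl, Finset.map_eq_image, Finset.image_image]
      have hcomp : (⇑e ∘ ⇑fl) = ⇑fl ∘ ⇑e₁ := by
        funext i
        show e (ι (Sum.inl i)) = ι (Sum.inl (e₁ i))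
        rw [he]
        simp [Equiv.permCongr_apply]
      rw [hcomp, ← Finset.image_image]
      congr 1
      exact Finset.image_univ_of_surjective e₁.surjective
    have hfix := hφ e hperm
    have hfun : (⇑(sumCongr e₁ e₂) ∘ ⇑ι.symm) = ⇑ι.symm ∘ ⇑e := by
      funext x
      show sumCongr e₁ e₂ (ι.symm x) = ι.symm (e x)
      rw [he]
      simp [Equiv.permCongr_apply]
    rw [hψdef, rename_rename, hfun, ← rename_rename, hfix]
  obtain ⟨q, hq⟩ := key k (n - k) ψ hψinv
  have hφψ : φ = rename ⇑ι ψ := by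
    rw [hψdef, rename_rename, Equiv.self_comp_symm, rename_id, AlgHom.id_apply]
  rw [show (Set.range (fun l : Fin k => esymmOn R S ((l : ℕ) + 1)) ∪
        Set.range (fun j : Fin (n - k) => esymmOn R Sᶜ ((j : ℕ) + 1)))
      = Set.range (Sum.elim (fun l : Fin k => esymmOn R S ((l : ℕ) + 1))
          (fun j : Fin (n - k) => esymmOn R Sᶜ ((j : ℕ) + 1))) from
      (Set.Sum.elim_range _ _).symm,
    Algebra.adjoin_range_eq_range_aeval]
  refine ⟨q, ?_⟩
  rw [hφψ, ← hq, comp_aeval_apply]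
  have hfuns : (Sum.elim (fun l : Fin k => esymmOn R S ((l : ℕ) + 1))
        (fun j : Fin (n - k) => esymmOn R Sᶜ ((j : ℕ) + 1)))
      = fun i => rename ⇑ι ((Sum.elim
          (fun l : Fin k => rename Sum.inl (esymm (Fin k) R ((l : ℕ) + 1)))
          (fun j : Fin (n - k) => rename Sum.inr (esymm (Fin (n - k)) R ((j : ℕ) + 1)))) i) := by
    funext s
    cases s with
    | inl l =>
      show esymmOn R S ((l : ℕ) + 1)
          = rename ⇑ι (rename Sum.inl (esymm (Fin k) R ((l : ℕ) + 1)))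
      rw [rename_rename, show (⇑ι ∘ Sum.inl) = ⇑fl from rfl, rename_esymm_map, ← hSl]
    | inr j =>
      show esymmOn R Sᶜ ((j : ℕ) + 1)
          = rename ⇑ι (rename Sum.inr (esymm (Fin (n - k)) R ((j : ℕ) + 1)))
      rw [rename_rename, show (⇑ι ∘ Sum.inr) = ⇑fr from rfl, rename_esymm_map, ← hSr]
  rw [hfuns]
  rfl
end

section
/- Let F be a field, n k : ℕ with k ≤ n, and let S = {i : Fin n | (i : ℕ) < k} (as a Finset) with complement Sᶜ. Then the family of n polynomials consisting of e_1(S), …, e_k(S) together with e_1(Sᶜ), …, e_{n−k}(Sᶜ) is algebraically independent over F in MvPolynomial (Fin n) F. -/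
open MvPolynomial Finset

section aux
variable {F : Type*} [Field F]

lemma aux₁ {ι τ : Type*} (σ : Type*) {g : ι → MvPolynomial τ F}
    (hg : AlgebraicIndependent F g) :
    AlgebraicIndependent F
      (Sum.elim (X ∘ Sum.inl : σ → MvPolynomial (σ ⊕ τ) F) (rename Sum.inr ∘ g)) := by
  have hgi : Function.Injective (aeval g : MvPolynomial ι F →ₐ[F] MvPolynomial τ F) :=
    algebraicIndependent_iff_injective_aeval.mp hg
  rw [algebraicIndependent_iff_injective_aeval]
  have key : (sumAlgEquiv F σ τ).toAlgHom.comp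
      (aeval (Sum.elim (X ∘ Sum.inl : σ → MvPolynomial (σ ⊕ τ) F) (rename Sum.inr ∘ g)))
      = (mapAlgHom (aeval g)).comp (sumAlgEquiv F σ ι).toAlgHom := by
    ext i
    cases i with
    | inl s => simp
    | inr i =>
      have h1 := AlgHom.congr_fun (sumAlgEquiv_comp_rename_inr (R := F) (S₁ := σ)
        (S₂ := τ)) (g i)
      simp only [AlgHom.coe_comp, Function.comp_apply, aeval_X, Sum.elim_inr] at h1 ⊢
      simp only [IsScalarTower.coe_toAlgHom', algebraMap_eq] at h1
      have h2 : (sumAlgEquiv F σ ι) (X (Sum.inr i)) = C (X i) := sumAlgEquiv_X_inr (R := F) (S₁ := σ) (S₂ := ι) i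
      rw [h1]; erw [h2]
      simp
  intro a b hab
  have : (sumAlgEquiv F σ τ).toAlgHom.comp
      (aeval (Sum.elim (X ∘ Sum.inl : σ → MvPolynomial (σ ⊕ τ) F) (rename Sum.inr ∘ g))) a
      = (sumAlgEquiv F σ τ).toAlgHom.comp
      (aeval (Sum.elim (X ∘ Sum.inl : σ → MvPolynomial (σ ⊕ τ) F) (rename Sum.inr ∘ g))) b := by
    simp only [AlgHom.coe_comp, Function.comp_apply, hab]
  rw [key] at this
  simp only [AlgHom.coe_comp, Function.comp_apply, mapAlgHom] at this
  exact (sumAlgEquiv F σ ι).injective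
    (MvPolynomial.map_injective _ hgi this)

lemma aux_comp {κ ι : Type*} {A : Type*} [CommRing A] [Algebra F A]
    {v : κ → A} (hv : AlgebraicIndependent F v) {p : ι → MvPolynomial κ F}
    (hp : AlgebraicIndependent F p) :
    AlgebraicIndependent F (fun i => aeval v (p i)) := by
  rw [algebraicIndependent_iff_injective_aeval] at *
  have : (aeval (fun i => aeval v (p i)) : MvPolynomial ι F →ₐ[F] A)
      = (aeval v).comp (aeval p) := by ext i; simp
  rw [this, AlgHom.coe_comp]
  exact hv.comp hp

lemma aux_sum {σ τ ι ι' : Type*} {f : ι → MvPolynomial σ F} {g : ι' → MvPolynomial τ F}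
    (hf : AlgebraicIndependent F f) (hg : AlgebraicIndependent F g) :
    AlgebraicIndependent F
      (Sum.elim (rename Sum.inl ∘ f) (rename Sum.inr ∘ g) :
        ι ⊕ ι' → MvPolynomial (σ ⊕ τ) F) := by
  have h1 : AlgebraicIndependent F
      (Sum.elim (X ∘ Sum.inl : σ → MvPolynomial (σ ⊕ τ) F) (rename Sum.inr ∘ g)) :=
    aux₁ σ hg
  have h2 : AlgebraicIndependent F
      (Sum.elim (rename Sum.inl ∘ f) (X ∘ Sum.inr) :
        ι ⊕ ι' → MvPolynomial (σ ⊕ ι') F) := by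
    have h0 := (aux₁ ι' hf).map'
      (f := (renameEquiv F (Equiv.sumComm ι' σ)).toAlgHom) (AlgEquiv.injective _)
    have h3 := h0.comp (Equiv.sumComm ι ι') (Equiv.injective _)
    convert h3 using 1
    funext i
    cases i with
    | inl i =>
      simp only [Function.comp_apply, Equiv.sumComm_apply, Sum.swap_inl, Sum.elim_inr,
        AlgEquiv.toAlgHom_eq_coe, AlgHom.coe_coe, renameEquiv_apply, Sum.elim_inl,
        rename_rename]
      change rename Sum.inl (f i) = rename (Equiv.sumComm ι' σ) (rename Sum.inr (f i))
      rw [rename_rename]; rfl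
    | inr j =>
      simp
  have := aux_comp h1 h2
  convert this using 1
  funext i
  cases i with
  | inl i =>
    simp only [Sum.elim_inl, Function.comp_apply, aeval_rename]
    rw [show (rename (Sum.inl : σ → σ ⊕ τ) (f i)) = aeval (X ∘ Sum.inl) (f i) from by rw [rename_eq_aeval]]
    congr 1
  | inr j =>
    simp

lemma esymm_algInd (F : Type*) [Field F] (m : ℕ) :
    AlgebraicIndependent F (fun l : Fin m => esymm (Fin m) F ((l : ℕ) + 1)) := by
  rw [algebraicIndependent_iff_injective_aeval]
  have : (aeval (fun l : Fin m => esymm (Fin m) F ((l : ℕ) + 1)) :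
      MvPolynomial (Fin m) F →ₐ[F] MvPolynomial (Fin m) F)
      = (Subalgebra.val _).comp (esymmAlgHom (Fin m) F m) := by
    ext i
    simp [esymmAlgHom]
  rw [this, AlgHom.coe_comp]
  exact Subtype.val_injective.comp (esymmAlgHom_fin_injective (R := F) le_rfl)

lemma rename_esymm_eq_esymmOn {σ' σ : Type*} [Fintype σ'] (j : σ' ↪ σ) (m : ℕ) :
    rename j (esymm σ' F m) = esymmOn F (Finset.univ.map j) m := by
  rw [MvPolynomial.esymm, map_sum, esymmOn, Finset.powersetCard_map, Finset.sum_map]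
  refine Finset.sum_congr rfl fun T _ => ?_
  rw [show (Finset.mapEmbedding j).toEmbedding T = T.map j from rfl, Finset.prod_map, map_prod]
  simp

end aux

/-- With `S = {i : Fin n | i < k}`, the `n` polynomials
`e_1(S), …, e_k(S), e_1(Sᶜ), …, e_{n-k}(Sᶜ)` are algebraically independent. -/
theorem algebraicIndependent_esymmOn_pair {F : Type*} [Field F] {n k : ℕ}
    (hk : k ≤ n) :
    AlgebraicIndependent F (fun i : Fin k ⊕ Fin (n - k) =>
      Sum.elim
        (fun l : Fin k =>
          esymmOn F ({i : Fin n | (i : ℕ) < k} : Finset (Fin n)) ((l : ℕ) + 1))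
        (fun j : Fin (n - k) =>
          esymmOn F (({i : Fin n | (i : ℕ) < k} : Finset (Fin n))ᶜ) ((j : ℕ) + 1))
        i) := by
  have hnk : k + (n - k) = n := by omega
  let E : Fin k ⊕ Fin (n - k) ≃ Fin n := finSumFinEquiv.trans (finCongr hnk)
  have hE1 : ∀ l : Fin k, ((E (Sum.inl l) : Fin n) : ℕ) = (l : ℕ) := by
    intro l; simp [E]
  have hE2 : ∀ j : Fin (n - k), ((E (Sum.inr j) : Fin n) : ℕ) = k + (j : ℕ) := by
    intro j; simp [E]
  let j₁ : Fin k ↪ Fin n := ⟨fun l => E (Sum.inl l), fun a b hab => by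
    simpa using E.injective hab⟩
  let j₂ : Fin (n - k) ↪ Fin n := ⟨fun l => E (Sum.inr l), fun a b hab => by
    simpa using E.injective hab⟩
  have hS1 : Finset.univ.map j₁ = ({i : Fin n | (i : ℕ) < k} : Finset (Fin n)) := by
    ext i
    simp only [Finset.mem_map, Finset.mem_univ, true_and, Finset.mem_filter, j₁,
      Function.Embedding.coeFn_mk]
    constructor
    · rintro ⟨l, rfl⟩; show ((E (Sum.inl l) : Fin n) : ℕ) < k; rw [hE1 l]; exact l.isLt
    · intro hi
      refine ⟨⟨(i : ℕ), hi⟩, ?_⟩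
      apply Fin.ext
      show ((E (Sum.inl ⟨(i : ℕ), hi⟩) : Fin n) : ℕ) = i
      rw [hE1]
  have hS2 : Finset.univ.map j₂ = (({i : Fin n | (i : ℕ) < k} : Finset (Fin n)))ᶜ := by
    ext i
    simp only [Finset.mem_map, Finset.mem_univ, true_and, Finset.mem_compl,
      Finset.mem_filter, j₂, Function.Embedding.coeFn_mk, not_and, not_lt]
    constructor
    · rintro ⟨l, rfl⟩
      show k ≤ ((E (Sum.inr l) : Fin n) : ℕ)
      rw [hE2 l]; omega
    · intro hik
      refine ⟨⟨(i : ℕ) - k, by omega⟩, ?_⟩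
      apply Fin.ext
      show ((E (Sum.inr ⟨(i : ℕ) - k, _⟩) : Fin n) : ℕ) = i
      rw [hE2]
      simp; omega
  have base := aux_sum (esymm_algInd F k) (esymm_algInd F (n - k))
  have h := base.map' (f := (renameEquiv F E).toAlgHom) (AlgEquiv.injective _)
  convert h using 1
  funext i
  cases i with
  | inl l =>
    simp only [Sum.elim_inl, Function.comp_apply, AlgEquiv.toAlgHom_eq_coe, AlgHom.coe_coe,
      renameEquiv_apply]
    change _ = rename E (rename Sum.inl _)
    rw [rename_rename]
    rw [show ((E : Fin k ⊕ Fin (n-k) → Fin n) ∘ Sum.inl) = ⇑j₁ from rfl,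
      rename_esymm_eq_esymmOn j₁, hS1]
  | inr j =>
    simp only [Sum.elim_inr, Function.comp_apply, AlgEquiv.toAlgHom_eq_coe, AlgHom.coe_coe,
      renameEquiv_apply]
    change _ = rename E (rename Sum.inr _)
    rw [rename_rename]
    rw [show ((E : Fin k ⊕ Fin (n-k) → Fin n) ∘ Sum.inr) = ⇑j₂ from rfl,
      rename_esymm_eq_esymmOn j₂, hS2]
end

section
/- Let F be a field, n k : ℕ with k ≤ n, and let S = {i : Fin n | (i : ℕ) < k} (as a Finset) with complement Sᶜ. Let θ be the F-algebra homomorphism from the polynomial ring F[u_1, …, u_k, v_1, …, v_{n−k}, w_1, …, w_n] to MvPolynomial (Fin n) F sending u_l ↦ e_l(S), v_j ↦ e_j(Sᶜ), and w_s ↦ e_s(univ) (the s-th elementary symmetric polynomial in all n variables). Then the kernel of θ is the ideal generated by the n elements Σ_{l+j=s, 0 ≤ l ≤ k, 0 ≤ j ≤ n−k} u_l · v_j − w_s for 1 ≤ s ≤ n, where one sets u_0 = v_0 = 1. -/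
/-- Auxiliary family: `padVar F emb 0 = 1` and `padVar F emb l = X (emb (l-1))`
for `1 ≤ l ≤ k`; this encodes the convention `u_0 = 1` for variables
`u_1, …, u_k` embedded via `emb`. -/
noncomputable def padVar {σ : Type*} (F : Type*) [CommRing F] {k : ℕ}
    (emb : Fin k → σ) (l : Fin (k + 1)) : MvPolynomial σ F :=
  if h : (l : ℕ) = 0 then 1
  else MvPolynomial.X (emb ⟨(l : ℕ) - 1, by have := l.isLt; omega⟩)

open Finset MvPolynomial

section Aux

variable {σ τ : Type*} {R : Type*} [CommRing R]

lemma esymmOn_zero (S : Finset σ) : esymmOn R S 0 = 1 := by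
  simp [esymmOn]

lemma esymm_eq_esymmOn (n : ℕ) [Fintype σ] : esymm σ R n = esymmOn R univ n := rfl

lemma rename_esymmOn [DecidableEq τ] {g : σ → τ} (hg : Function.Injective g)
    (A : Finset σ) (l : ℕ) :
    rename g (esymmOn R A l) = esymmOn R (A.image g) l := by
  classical
  rw [esymmOn, map_sum]
  refine Finset.sum_nbij (fun T => T.image g) ?_ ?_ ?_ ?_
  · intro T hT
    rw [mem_powersetCard] at hT ⊢
    exact ⟨image_subset_image hT.1, by rw [card_image_of_injective _ hg, hT.2]⟩
  · intro T _ T' _ h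
    exact Finset.image_injective hg h
  · intro T hT
    rw [mem_coe, mem_powersetCard] at hT
    obtain ⟨hsub, hcard⟩ := hT
    obtain ⟨T', hT', rfl⟩ := subset_image_iff.1 hsub
    refine ⟨T', ?_, rfl⟩
    rw [mem_coe, mem_powersetCard]
    exact ⟨hT', by rwa [card_image_of_injective _ hg] at hcard⟩
  · intro T _
    rw [map_prod, prod_image fun a _ b _ h => hg h]
    simp

lemma esymmOn_union [DecidableEq σ] {A B : Finset σ} (hd : Disjoint A B) (m : ℕ) :
    esymmOn R (A ∪ B) m =
      ∑ l ∈ range (A.card + 1), ∑ j ∈ range (B.card + 1),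
        if l + j = m then esymmOn R A l * esymmOn R B j else 0 := by
  have key : ∀ T₁ T₂ : Finset σ, T₁ ⊆ A → T₂ ⊆ B → Disjoint T₁ T₂ :=
    fun T₁ T₂ h1 h2 => hd.mono h1 h2
  calc esymmOn R (A ∪ B) m
      = ∑ x ∈ ((((range (A.card+1)) ×ˢ (range (B.card+1))).filter
            (fun p => p.1 + p.2 = m)).sigma
          (fun p => A.powersetCard p.1 ×ˢ B.powersetCard p.2)),
          ∏ i ∈ x.2.1 ∪ x.2.2, X i := by
        rw [esymmOn]
        refine sum_nbij' (fun T => ⟨((T ∩ A).card, (T ∩ B).card), (T ∩ A, T ∩ B)⟩)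
          (fun x => x.2.1 ∪ x.2.2) ?_ ?_ ?_ ?_ ?_
        · intro T hT
          rw [mem_powersetCard] at hT
          have hdT : Disjoint (T ∩ A) (T ∩ B) := key _ _ inter_subset_right inter_subset_right
          have hu : (T ∩ A) ∪ (T ∩ B) = T := by
            rw [← inter_union_distrib_left, inter_eq_left.2 hT.1]
          refine mem_sigma.2 ⟨mem_filter.2 ⟨mem_product.2
            ⟨mem_range.2 (Nat.lt_succ_of_le (card_le_card inter_subset_right)),
             mem_range.2 (Nat.lt_succ_of_le (card_le_card inter_subset_right))⟩, ?_⟩,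
            mem_product.2 ⟨mem_powersetCard.2 ⟨inter_subset_right, rfl⟩,
              mem_powersetCard.2 ⟨inter_subset_right, rfl⟩⟩⟩
          rw [← card_union_of_disjoint hdT, hu, hT.2]
        · rintro ⟨⟨l, j⟩, T₁, T₂⟩ hx
          simp only [mem_sigma, mem_filter, mem_product, mem_range, mem_powersetCard] at hx
          rw [mem_powersetCard]
          constructor
          · exact union_subset (hx.2.1.1.trans subset_union_left)
              (hx.2.2.1.trans subset_union_right)
          · rw [card_union_of_disjoint (key _ _ hx.2.1.1 hx.2.2.1), hx.2.1.2, hx.2.2.2,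
              hx.1.2]
        · intro T hT
          rw [mem_powersetCard] at hT
          simp only
          rw [← inter_union_distrib_left, inter_eq_left.2 hT.1]
        · rintro ⟨⟨l, j⟩, T₁, T₂⟩ hx
          simp only [mem_sigma, mem_filter, mem_product, mem_range, mem_powersetCard] at hx
          have h1 : (T₁ ∪ T₂) ∩ A = T₁ := by
            rw [union_inter_distrib_right, inter_eq_left.2 hx.2.1.1,
              disjoint_iff_inter_eq_empty.1 (hd.symm.mono_left hx.2.2.1), union_empty]
          have h2 : (T₁ ∪ T₂) ∩ B = T₂ := by
            rw [union_inter_distrib_right, inter_eq_left.2 hx.2.2.1,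
              disjoint_iff_inter_eq_empty.1 (hd.mono_left hx.2.1.1), empty_union]
          simp only [h1, h2, hx.2.1.2, hx.2.2.2]
        · intro T hT
          rw [mem_powersetCard] at hT
          simp only
          rw [← inter_union_distrib_left, inter_eq_left.2 hT.1]
    _ = ∑ l ∈ range (A.card + 1), ∑ j ∈ range (B.card + 1),
        if l + j = m then esymmOn R A l * esymmOn R B j else 0 := by
        rw [sum_sigma]
        have step : ∀ p : ℕ × ℕ,
            (∑ x ∈ A.powersetCard p.1 ×ˢ B.powersetCard p.2, ∏ i ∈ x.1 ∪ x.2, X i)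
              = esymmOn R A p.1 * esymmOn R B p.2 := by
          intro p
          rw [sum_product]
          simp only [esymmOn, sum_mul_sum]
          refine sum_congr rfl fun T₁ h₁ => sum_congr rfl fun T₂ h₂ => ?_
          rw [mem_powersetCard] at h₁ h₂
          exact prod_union (key _ _ h₁.1 h₂.1)
        calc (∑ p ∈ (((range (A.card+1)) ×ˢ (range (B.card+1))).filter
                (fun p => p.1 + p.2 = m)),
              ∑ x ∈ A.powersetCard p.1 ×ˢ B.powersetCard p.2, ∏ i ∈ x.1 ∪ x.2, X i)
            = ∑ p ∈ (((range (A.card+1)) ×ˢ (range (B.card+1))).filter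
                (fun p => p.1 + p.2 = m)), esymmOn R A p.1 * esymmOn R B p.2 :=
              sum_congr rfl fun p _ => step p
          _ = ∑ p ∈ (range (A.card+1)) ×ˢ (range (B.card+1)),
                if p.1 + p.2 = m then esymmOn R A p.1 * esymmOn R B p.2 else 0 :=
              sum_filter _ _
          _ = ∑ l ∈ range (A.card + 1), ∑ j ∈ range (B.card + 1),
                if l + j = m then esymmOn R A l * esymmOn R B j else 0 := by
              rw [sum_product]

lemma sub_aeval_mem_span (h : σ → MvPolynomial σ R) (p : MvPolynomial σ R) :
    p - MvPolynomial.aeval h p ∈ Ideal.span (Set.range fun i => X i - h i) := by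
  set J := Ideal.span (Set.range fun i : σ => X i - h i) with hJ
  induction p using MvPolynomial.induction_on with
  | C a => simp only [aeval_C, algebraMap_eq, sub_self]; exact J.zero_mem
  | add p q hp hq =>
      have : p + q - aeval h (p + q) = (p - aeval h p) + (q - aeval h q) := by
        rw [map_add]; ring
      rw [this]; exact J.add_mem hp hq
  | mul_X p i hp =>
      have : p * X i - aeval h (p * X i)
          = (p - aeval h p) * X i + aeval h p * (X i - h i) := by
        rw [map_mul, aeval_X]; ring
      rw [this]
      exact J.add_mem (J.mul_mem_right _ hp)
        (J.mul_mem_left _ (Ideal.subset_span ⟨i, rfl⟩))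

lemma ker_aeval_self (h : σ → MvPolynomial σ R)
    (hh : ∀ i, MvPolynomial.aeval h (h i) = h i) :
    RingHom.ker (MvPolynomial.aeval h : MvPolynomial σ R →ₐ[R] MvPolynomial σ R)
      = Ideal.span (Set.range fun i => X i - h i) := by
  refine le_antisymm ?_ ?_
  · intro p hp
    rw [RingHom.mem_ker] at hp
    have := sub_aeval_mem_span h p
    rwa [hp, sub_zero] at this
  · rw [Ideal.span_le]
    rintro _ ⟨i, rfl⟩
    simp only [SetLike.mem_coe, RingHom.mem_ker, map_sub, aeval_X, hh, sub_self]

end Aux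

section ThetaUV

variable {σ τ : Type*} (F : Type*) [CommRing F]

/-- `sumAlgEquiv` sends `rename inl p` to `map C p`. -/
lemma sumAlgEquiv_rename_inl_s7 {A B : Type*} (p : MvPolynomial A F) :
    sumAlgEquiv F A B (rename Sum.inl p)
      = MvPolynomial.map (algebraMap F (MvPolynomial B F)) p := by
  have := congrArg (fun f => f p)
    (congrArg DFunLike.coe (sumAlgEquiv_comp_rename_inl (R := F) (S₁ := A) (S₂ := B)))
  simpa [MvPolynomial.mapAlgHom_apply, Algebra.ofId_apply] using this

lemma sumAlgEquiv_rename_inr_s7 {A B : Type*} (q : MvPolynomial B F) :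
    sumAlgEquiv F A B (rename Sum.inr q) = C q := by
  have := congrArg (fun f => f q)
    (congrArg DFunLike.coe (sumAlgEquiv_comp_rename_inr (R := F) (S₁ := A) (S₂ := B)))
  simpa using this

/-- The restriction of the presentation map to the `u` and `v` variables. -/
noncomputable def thetaUV {n k : ℕ} (hk : k ≤ n) :
    MvPolynomial (Fin k ⊕ Fin (n - k)) F →ₐ[F] MvPolynomial (Fin n) F :=
  aeval (Sum.elim
    (fun l : Fin k => esymmOn F ({i : Fin n | (i : ℕ) < k} : Finset (Fin n)) ((l : ℕ) + 1))
    (fun j : Fin (n - k) =>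
      esymmOn F (({i : Fin n | (i : ℕ) < k} : Finset (Fin n))ᶜ) ((j : ℕ) + 1)))

lemma image_inl_eq {n k : ℕ} (hk : k ≤ n) :
    Finset.univ.image
        (fun a : Fin k => (finSumFinEquiv.trans (finCongr (Nat.add_sub_cancel' hk))) (Sum.inl a))
      = ({i : Fin n | (i : ℕ) < k} : Finset (Fin n)) := by
  ext i
  simp only [Finset.mem_image, Finset.mem_univ, true_and, Finset.mem_filter,
    Equiv.trans_apply, finSumFinEquiv_apply_left, finCongr_apply]
  constructor
  · rintro ⟨a, rfl⟩; simp
  · rintro hi; exact ⟨⟨i, hi⟩, by ext; simp⟩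

lemma image_inr_eq {n k : ℕ} (hk : k ≤ n) :
    Finset.univ.image
        (fun b : Fin (n - k) =>
          (finSumFinEquiv.trans (finCongr (Nat.add_sub_cancel' hk))) (Sum.inr b))
      = ({i : Fin n | (i : ℕ) < k} : Finset (Fin n))ᶜ := by
  ext i
  simp only [Finset.mem_image, Finset.mem_univ, true_and, Finset.mem_compl, Finset.mem_filter,
    Equiv.trans_apply, finSumFinEquiv_apply_right, finCongr_apply, not_lt]
  constructor
  · rintro ⟨b, rfl⟩; simp
  · rintro hi; exact ⟨⟨i - k, by omega⟩, by ext; simp; omega⟩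

lemma thetaUV_injective {n k : ℕ} (hk : k ≤ n) :
    Function.Injective (thetaUV F hk) := by
  classical
  let A := Fin k
  let B := Fin (n - k)
  set e : Fin k ⊕ Fin (n - k) ≃ Fin n :=
    finSumFinEquiv.trans (finCongr (Nat.add_sub_cancel' hk)) with he
  have himl : Finset.univ.image (fun a : A => e (Sum.inl a))
      = ({i : Fin n | (i : ℕ) < k} : Finset (Fin n)) := image_inl_eq hk
  have himr : Finset.univ.image (fun b : B => e (Sum.inr b))
      = ({i : Fin n | (i : ℕ) < k} : Finset (Fin n))ᶜ := image_inr_eq hk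
  set φB : MvPolynomial B F →ₐ[F] MvPolynomial B F :=
    aeval (fun b : B => esymm B F ((b : ℕ) + 1)) with hφB
  set Φ₁ : MvPolynomial A (MvPolynomial B F) →ₐ[MvPolynomial B F]
      MvPolynomial A (MvPolynomial B F) :=
    aeval (fun a : A => esymm A (MvPolynomial B F) ((a : ℕ) + 1)) with hΦ₁
  set comp1 : MvPolynomial (A ⊕ B) F →ₐ[F] MvPolynomial (Fin n) F :=
    (renameEquiv F e).toAlgHom.comp ((sumAlgEquiv F A B).symm.toAlgHom.comp
      ((mapAlgHom φB).comp ((Φ₁.restrictScalars F).comp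
        (sumAlgEquiv F A B).toAlgHom))) with hcomp1
  have heq : thetaUV F hk = comp1 := by
    apply algHom_ext
    rintro (a | b)
    · have h1 : sumAlgEquiv F A B (X (Sum.inl a)) = X a := by
        simp [sumAlgEquiv_X_inl]
      have h2 : Φ₁ (X a) = esymm A (MvPolynomial B F) ((a : ℕ) + 1) := by
        rw [hΦ₁, aeval_X]
      have h3 : mapAlgHom (σ := A) φB (esymm A (MvPolynomial B F) ((a : ℕ) + 1))
          = esymm A (MvPolynomial B F) ((a : ℕ) + 1) := by
        show MvPolynomial.map (φB : MvPolynomial B F →+* MvPolynomial B F) _ = _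
        rw [map_esymm]
      have h4 : (sumAlgEquiv F A B).symm (esymm A (MvPolynomial B F) ((a : ℕ) + 1))
          = rename Sum.inl (esymm A F ((a : ℕ) + 1)) := by
        rw [AlgEquiv.symm_apply_eq, sumAlgEquiv_rename_inl_s7, map_esymm]
      have h5 : renameEquiv F e (rename Sum.inl (esymm A F ((a : ℕ) + 1)))
          = esymmOn F ({i : Fin n | (i : ℕ) < k} : Finset (Fin n)) ((a : ℕ) + 1) := by
        rw [renameEquiv_apply, rename_rename, esymm_eq_esymmOn,
          rename_esymmOn (e.injective.comp Sum.inl_injective), ← himl]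
        rfl
      simp only [thetaUV, aeval_X, Sum.elim_inl, hcomp1, AlgHom.comp_apply,
        AlgEquiv.toAlgHom_eq_coe, AlgHom.coe_coe, AlgEquiv.coe_toAlgHom, h1, AlgHom.restrictScalars_apply, h2, h3, h4, h5]
    · have h1 : sumAlgEquiv F A B (X (Sum.inr b)) = C (X b) := by
        simp [sumAlgEquiv_X_inr]
      have h2 : Φ₁ (C (X b)) = C (X b) := by
        rw [hΦ₁, aeval_C]; rfl
      have h3 : mapAlgHom (σ := A) φB (C (X b)) = C (esymm B F ((b : ℕ) + 1)) := by
        show MvPolynomial.map (φB : MvPolynomial B F →+* MvPolynomial B F) _ = _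
        rw [map_C, RingHom.coe_coe, hφB, aeval_X]
      have h4 : (sumAlgEquiv F A B).symm (C (esymm B F ((b : ℕ) + 1)))
          = rename Sum.inr (esymm B F ((b : ℕ) + 1)) := by
        rw [AlgEquiv.symm_apply_eq, sumAlgEquiv_rename_inr_s7]
      have h5 : renameEquiv F e (rename Sum.inr (esymm B F ((b : ℕ) + 1)))
          = esymmOn F (({i : Fin n | (i : ℕ) < k} : Finset (Fin n))ᶜ) ((b : ℕ) + 1) := by
        rw [renameEquiv_apply, rename_rename, esymm_eq_esymmOn,
          rename_esymmOn (e.injective.comp Sum.inr_injective), ← himr]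
        rfl
      simp only [thetaUV, aeval_X, Sum.elim_inr, hcomp1, AlgHom.comp_apply,
        AlgEquiv.toAlgHom_eq_coe, AlgHom.coe_coe, AlgEquiv.coe_toAlgHom, h1, AlgHom.restrictScalars_apply, h2, h3, h4, h5]
  rw [heq, hcomp1]
  simp only [AlgHom.coe_comp, AlgEquiv.toAlgHom_eq_coe, AlgHom.coe_coe,
    AlgHom.coe_restrictScalars']
  have hφB_inj : Function.Injective φB := by
    have : ⇑φB = Subtype.val ∘ ⇑(esymmAlgHom B F (n - k)) := by
      funext p
      exact (esymmAlgHom_apply (σ := B) (R := F) (n := n - k) p).symm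
    rw [this]
    exact Subtype.val_injective.comp (esymmAlgHom_fin_injective F le_rfl)
  have hΦ₁_inj : Function.Injective Φ₁ := by
    have : ⇑Φ₁ = Subtype.val ∘ ⇑(esymmAlgHom A (MvPolynomial B F) k) := by
      funext p
      exact (esymmAlgHom_apply (σ := A) (R := MvPolynomial B F) (n := k) p).symm
    rw [this]
    exact Subtype.val_injective.comp (esymmAlgHom_fin_injective _ le_rfl)
  have hmap_inj : Function.Injective (mapAlgHom (σ := A) φB) := by
    have : ⇑(mapAlgHom (σ := A) φB)
        = ⇑(MvPolynomial.map (φB : MvPolynomial B F →+* MvPolynomial B F)) := rfl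
    rw [this]
    exact MvPolynomial.map_injective _ hφB_inj
  exact (renameEquiv F e).injective.comp ((sumAlgEquiv F A B).symm.injective.comp
    (hmap_inj.comp (hΦ₁_inj.comp (sumAlgEquiv F A B).injective)))

end ThetaUV

/-- The kernel of the presentation
`F[u_1,…,u_k, v_1,…,v_{n-k}, w_1,…,w_n] → F[x_1,…,x_n]`,
`u_l ↦ e_l(S)`, `v_j ↦ e_j(Sᶜ)`, `w_s ↦ e_s(univ)` (for `S = {i | i < k}`),
is generated by the `n` elements `Σ_{l+j=s} u_l v_j − w_s`, `1 ≤ s ≤ n`,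
with the convention `u_0 = v_0 = 1`. -/
theorem kernel_esymmOn_presentation {F : Type*} [Field F] {n k : ℕ} (hk : k ≤ n) :
    RingHom.ker (MvPolynomial.aeval
        (fun i : Fin k ⊕ (Fin (n - k) ⊕ Fin n) =>
          Sum.elim
            (fun l : Fin k =>
              esymmOn F ({i : Fin n | (i : ℕ) < k} : Finset (Fin n)) ((l : ℕ) + 1))
            (Sum.elim
              (fun j : Fin (n - k) =>
                esymmOn F (({i : Fin n | (i : ℕ) < k} : Finset (Fin n))ᶜ) ((j : ℕ) + 1))
              (fun s : Fin n =>
                esymmOn F (Finset.univ : Finset (Fin n)) ((s : ℕ) + 1)))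
            i) :
        MvPolynomial (Fin k ⊕ (Fin (n - k) ⊕ Fin n)) F →ₐ[F] MvPolynomial (Fin n) F)
      = Ideal.span {g : MvPolynomial (Fin k ⊕ (Fin (n - k) ⊕ Fin n)) F |
          ∃ s : Fin n,
            g = (∑ l : Fin (k + 1), ∑ j : Fin (n - k + 1),
                  if (l : ℕ) + (j : ℕ) = (s : ℕ) + 1 then
                    padVar F Sum.inl l * padVar F (Sum.inr ∘ Sum.inl) j
                  else 0)
                - MvPolynomial.X (Sum.inr (Sum.inr s))} := by
  classical
  set S : Finset (Fin n) := {i : Fin n | (i : ℕ) < k} with hS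
  set Q : Fin n → MvPolynomial (Fin k ⊕ (Fin (n - k) ⊕ Fin n)) F := fun s =>
    ∑ l : Fin (k + 1), ∑ j : Fin (n - k + 1),
      if (l : ℕ) + (j : ℕ) = (s : ℕ) + 1 then
        padVar F Sum.inl l * padVar F (Sum.inr ∘ Sum.inl) j
      else 0 with hQ
  set h : (Fin k ⊕ (Fin (n - k) ⊕ Fin n)) →
      MvPolynomial (Fin k ⊕ (Fin (n - k) ⊕ Fin n)) F :=
    Sum.elim (fun l => X (Sum.inl l))
      (Sum.elim (fun j => X (Sum.inr (Sum.inl j))) Q) with hh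
  set θ : MvPolynomial (Fin k ⊕ (Fin (n - k) ⊕ Fin n)) F →ₐ[F] MvPolynomial (Fin n) F :=
    MvPolynomial.aeval
      (fun i : Fin k ⊕ (Fin (n - k) ⊕ Fin n) =>
        Sum.elim
          (fun l : Fin k => esymmOn F S ((l : ℕ) + 1))
          (Sum.elim
            (fun j : Fin (n - k) => esymmOn F Sᶜ ((j : ℕ) + 1))
            (fun s : Fin n => esymmOn F (Finset.univ : Finset (Fin n)) ((s : ℕ) + 1)))
          i) with hθ
  have hcardS : S.card = k := by
    have hinj : Function.Injective
        (fun a : Fin k => (finSumFinEquiv.trans (finCongr (Nat.add_sub_cancel' hk)))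
          (Sum.inl a)) :=
      fun a b hab => Sum.inl_injective (Equiv.injective _ hab)
    rw [hS, ← image_inl_eq hk, card_image_of_injective _ hinj]
    simp
  have hcardSc : Sᶜ.card = n - k := by
    rw [card_compl, hcardS]; simp
  -- images of padVar under θ
  have hθu : ∀ l : Fin (k + 1), θ (padVar F Sum.inl l) = esymmOn F S (l : ℕ) := by
    intro l
    by_cases h0 : (l : ℕ) = 0
    · rw [padVar, dif_pos h0, h0, esymmOn_zero, map_one]
    · rw [padVar, dif_neg h0, hθ, aeval_X]
      show esymmOn F S ((l : ℕ) - 1 + 1) = esymmOn F S (l : ℕ)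
      congr 1
      omega
  have hθv : ∀ j : Fin (n - k + 1),
      θ (padVar F (Sum.inr ∘ Sum.inl) j) = esymmOn F Sᶜ (j : ℕ) := by
    intro j
    by_cases h0 : (j : ℕ) = 0
    · rw [padVar, dif_pos h0, h0, esymmOn_zero, map_one]
    · rw [padVar, dif_neg h0, hθ, aeval_X]
      show esymmOn F Sᶜ ((j : ℕ) - 1 + 1) = esymmOn F Sᶜ (j : ℕ)
      congr 1
      omega
  have hθQ : ∀ s : Fin n, θ (Q s) = esymmOn F Finset.univ ((s : ℕ) + 1) := by
    intro s
    rw [hQ]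
    simp only [map_sum, apply_ite ⇑θ, map_mul, map_zero, hθu, hθv]
    have hconv := esymmOn_union (R := F) (disjoint_compl_right : Disjoint S Sᶜ) ((s : ℕ) + 1)
    rw [union_compl, hcardS, hcardSc] at hconv
    rw [hconv,
      Fin.sum_univ_eq_sum_range (fun l => ∑ j : Fin (n - k + 1),
        if l + (j : ℕ) = (s : ℕ) + 1 then esymmOn F S l * esymmOn F Sᶜ (j : ℕ) else 0) (k + 1)]
    exact sum_congr rfl fun l _ =>
      Fin.sum_univ_eq_sum_range
        (fun j => if l + j = (s : ℕ) + 1 then esymmOn F S l * esymmOn F Sᶜ j else 0) (n - k + 1)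
  -- `aeval h` fixes `h`
  have hufix : ∀ l, MvPolynomial.aeval h (padVar F Sum.inl l) = padVar F Sum.inl l := by
    intro l
    by_cases h0 : (l : ℕ) = 0 <;> simp [padVar, h0, hh]
  have hvfix : ∀ j, MvPolynomial.aeval h (padVar F (Sum.inr ∘ Sum.inl) j)
      = padVar F (Sum.inr ∘ Sum.inl) j := by
    intro j
    by_cases h0 : (j : ℕ) = 0 <;> simp [padVar, h0, hh]
  have hQfix : ∀ s, MvPolynomial.aeval h (Q s) = Q s := by
    intro s
    rw [hQ]
    simp only [map_sum, apply_ite ⇑(MvPolynomial.aeval h), map_mul, map_zero, hufix, hvfix]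
  have hhfix : ∀ i, MvPolynomial.aeval h (h i) = h i := by
    rintro (l | j | s)
    · simp [hh]
    · simp [hh]
    · simp only [hh, Sum.elim_inr]
      exact hQfix s
  -- θ identifies `h i` and `X i`
  have hXh : ∀ i, θ (h i) = θ (X i) := by
    rintro (l | j | s)
    · simp [hh]
    · simp [hh]
    · simp only [hh, Sum.elim_inr]
      rw [hθQ s, hθ, aeval_X]
      simp
  have hcomp : θ.comp (MvPolynomial.aeval h) = θ := by
    apply algHom_ext
    intro i
    rw [AlgHom.comp_apply, aeval_X]
    exact hXh i
  -- the factorization through the `u, v` variables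
  set emb : (Fin k ⊕ Fin (n - k)) → (Fin k ⊕ (Fin (n - k) ⊕ Fin n)) :=
    Sum.map id Sum.inl with hemb
  set Q' : Fin n → MvPolynomial (Fin k ⊕ Fin (n - k)) F := fun s =>
    ∑ l : Fin (k + 1), ∑ j : Fin (n - k + 1),
      if (l : ℕ) + (j : ℕ) = (s : ℕ) + 1 then
        padVar F Sum.inl l * padVar F Sum.inr j
      else 0 with hQ'
  set π : MvPolynomial (Fin k ⊕ (Fin (n - k) ⊕ Fin n)) F →ₐ[F]
      MvPolynomial (Fin k ⊕ Fin (n - k)) F :=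
    MvPolynomial.aeval (Sum.elim (fun l => X (Sum.inl l))
      (Sum.elim (fun j => X (Sum.inr j)) Q')) with hπ
  have hrQ' : ∀ s, rename emb (Q' s) = Q s := by
    intro s
    rw [hQ', hQ]
    have hu : ∀ l, rename emb (padVar F Sum.inl l) = padVar F Sum.inl l := by
      intro l
      by_cases h0 : (l : ℕ) = 0 <;> simp [padVar, h0, hemb]
    have hv : ∀ j, rename emb (padVar F Sum.inr j) = padVar F (Sum.inr ∘ Sum.inl) j := by
      intro j
      by_cases h0 : (j : ℕ) = 0 <;> simp [padVar, h0, hemb]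
    simp only [map_sum, apply_ite ⇑(rename emb), map_mul, map_zero, hu, hv]
  have hρπ : ((rename emb).comp π : MvPolynomial (Fin k ⊕ (Fin (n - k) ⊕ Fin n)) F →ₐ[F]
      MvPolynomial (Fin k ⊕ (Fin (n - k) ⊕ Fin n)) F) = MvPolynomial.aeval h := by
    apply algHom_ext
    rintro (l | j | s) <;>
      simp only [AlgHom.comp_apply, aeval_X, hπ, hh, Sum.elim_inl, Sum.elim_inr]
    · simp [hemb]
    · simp [hemb]
    · exact hrQ' s
  have hθρ : θ.comp (rename emb) = thetaUV F hk := by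
    apply algHom_ext
    rintro (l | j) <;>
      simp [thetaUV, hemb, hθ, hS]
  have hker_h : ∀ p, θ p = 0 → MvPolynomial.aeval h p = 0 := by
    intro p hp
    have h1 : MvPolynomial.aeval h p = rename emb (π p) :=
      (congrArg (fun f => f p) (congrArg DFunLike.coe hρπ)).symm
    have h3 : θ (MvPolynomial.aeval h p) = θ p :=
      congrArg (fun f => f p) (congrArg DFunLike.coe hcomp)
    have h2 : thetaUV F hk (π p) = θ (rename emb (π p)) :=
      (congrArg (fun f => f (π p)) (congrArg DFunLike.coe hθρ)).symm
    have h4 : thetaUV F hk (π p) = 0 := by rw [h2, ← h1, h3, hp]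
    have h5 : π p = 0 := thetaUV_injective F hk (by rw [h4, map_zero])
    rw [h1, h5, map_zero]
  -- conclusion
  refine le_antisymm ?_ ?_
  · intro p hp
    rw [RingHom.mem_ker] at hp
    have h0 := hker_h p hp
    have hmem := sub_aeval_mem_span h p
    rw [h0, sub_zero] at hmem
    have hle : Ideal.span (Set.range fun i => X i - h i)
        ≤ Ideal.span {g : MvPolynomial (Fin k ⊕ (Fin (n - k) ⊕ Fin n)) F |
            ∃ s : Fin n, g = Q s - X (Sum.inr (Sum.inr s))} := by
      rw [Ideal.span_le]
      rintro _ ⟨i, rfl⟩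
      rcases i with l | j | s
      · simp only [hh, Sum.elim_inl, sub_self]
        exact (Ideal.span _).zero_mem
      · simp only [hh, Sum.elim_inr, Sum.elim_inl, sub_self]
        exact (Ideal.span _).zero_mem
      · simp only [hh, Sum.elim_inr]
        have hneg : X (Sum.inr (Sum.inr s)) - Q s
            = -(Q s - X (Sum.inr (Sum.inr s))) := by ring
        rw [hneg]
        exact neg_mem (Ideal.subset_span ⟨s, rfl⟩)
    exact hle hmem
  · rw [Ideal.span_le]
    rintro g ⟨s, rfl⟩
    rw [SetLike.mem_coe, RingHom.mem_ker, map_sub]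
    have hxw : θ (Q s) = θ (X (Sum.inr (Sum.inr s))) := by
      have := hXh (Sum.inr (Sum.inr s))
      simpa only [hh, Sum.elim_inr] using this
    rw [hxw, sub_self]
end

section
/- Let W be a finite type, R a commutative ring, a : W → R, and A, B : Finset W. Then P(A) · P(B) = P(A ∪ B) · P(A ∩ B) · (∏_{l ∈ A \ B} ∏_{j ∈ B \ A} (a l − a j)) · (∏_{l ∈ B \ A} ∏_{j ∈ A \ B} (a l − a j)). -/
private lemma prodF_union_left {W : Type*} [DecidableEq W] {R : Type*} [CommRing R]
    (a : W → R) {S T : Finset W} (h : Disjoint S T) (U : Finset W) :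
    (∏ l ∈ S ∪ T, ∏ j ∈ U, (a l - a j))
      = (∏ l ∈ S, ∏ j ∈ U, (a l - a j)) * ∏ l ∈ T, ∏ j ∈ U, (a l - a j) :=
  Finset.prod_union h

private lemma prodF_union_right {W : Type*} [DecidableEq W] {R : Type*} [CommRing R]
    (a : W → R) (S : Finset W) {T U : Finset W} (h : Disjoint T U) :
    (∏ l ∈ S, ∏ j ∈ T ∪ U, (a l - a j))
      = (∏ l ∈ S, ∏ j ∈ T, (a l - a j)) * ∏ l ∈ S, ∏ j ∈ U, (a l - a j) := by
  rw [← Finset.prod_mul_distrib]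
  exact Finset.prod_congr rfl fun l _ => Finset.prod_union h

/-- `P S = ∏_{l ∈ S} ∏_{j ∈ W \ S} (a l − a j)`. -/
def eulerP {W : Type*} [Fintype W] [DecidableEq W] {R : Type*} [CommRing R]
    (a : W → R) (S : Finset W) : R :=
  ∏ l ∈ S, ∏ j ∈ Sᶜ, (a l - a j)

/-- `P(A) · P(B) = P(A ∪ B) · P(A ∩ B) · ∏_{A\B × B\A} (a l − a j) ·
∏_{B\A × A\B} (a l − a j)`. -/
theorem eulerP_mul_eulerP {W : Type*} [Fintype W] [DecidableEq W]
    {R : Type*} [CommRing R] (a : W → R) (A B : Finset W) :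
    eulerP a A * eulerP a B
      = eulerP a (A ∪ B) * eulerP a (A ∩ B)
          * (∏ l ∈ A \ B, ∏ j ∈ B \ A, (a l - a j))
          * (∏ l ∈ B \ A, ∏ j ∈ A \ B, (a l - a j)) := by
  classical
  set I := A ∩ B with hI
  set X := A \ B with hX
  set Y := B \ A with hY
  set O := (A ∪ B)ᶜ with hO
  have hA : A = I ∪ X := by
    ext w; simp [hI, hX]; tauto
  have hAc : Aᶜ = Y ∪ O := by
    ext w; simp [hY, hO]; tauto
  have hB : B = I ∪ Y := by
    ext w; simp [hI, hY]; tauto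
  have hBc : Bᶜ = X ∪ O := by
    ext w; simp [hX, hO]; tauto
  have hAB : A ∪ B = I ∪ X ∪ Y := by
    ext w; simp [hI, hX, hY]; tauto
  have hABc : (A ∩ B)ᶜ = X ∪ Y ∪ O := by
    ext w; simp [hX, hY, hO]; tauto
  have dIX : Disjoint I X := by
    rw [Finset.disjoint_left]; intro w; simp [hI, hX]; tauto
  have dIXY : Disjoint (I ∪ X) Y := by
    rw [Finset.disjoint_left]; intro w; simp [hI, hX, hY]; tauto
  have dYO : Disjoint Y O := by
    rw [Finset.disjoint_left]; intro w; simp [hY, hO]; tauto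
  have dIY : Disjoint I Y := by
    rw [Finset.disjoint_left]; intro w; simp [hI, hY]; tauto
  have dXO : Disjoint X O := by
    rw [Finset.disjoint_left]; intro w; simp [hX, hO]; tauto
  have dXYO : Disjoint (X ∪ Y) O := by
    rw [Finset.disjoint_left]; intro w; simp [hX, hY, hO]; tauto
  have dXY : Disjoint X Y := by
    rw [Finset.disjoint_left]; intro w; simp [hX, hY]; tauto
  unfold eulerP
  rw [← hO, hABc, hAB]
  conv_lhs => rw [hAc, hA, hBc, hB]
  rw [prodF_union_left a dIX, prodF_union_right a I dYO, prodF_union_right a X dYO,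
    prodF_union_left a dIY, prodF_union_right a I dXO, prodF_union_right a Y dXO,
    prodF_union_left a dIXY, prodF_union_left a dIX,
    prodF_union_right a I dXYO, prodF_union_right a I dXY]
  ring
end

section
/- Let W be a finite type, R a commutative ring, a : W → R, and A, B : Finset W. Then Q(A ∪ B) · Q(A ∩ B) = Q(A) · Q(B) · (∏_{l ∈ A \ B} ∏_{j ∈ B \ A} (a l − a j)) · (∏_{l ∈ B \ A} ∏_{j ∈ A \ B} (a l − a j)). -/
/-- `Q S = ∏_{l ∈ S} ∏_{j ∈ S, j ≠ l} (a l − a j)`. -/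
def vandermondeQ {W : Type*} {R : Type*} [CommRing R] [DecidableEq W]
    (a : W → R) (S : Finset W) : R :=
  ∏ l ∈ S, ∏ j ∈ S.erase l, (a l - a j)

lemma vandermondeQ_eq_offDiag {W R : Type*} [CommRing R] [DecidableEq W]
    (a : W → R) (S : Finset W) :
    vandermondeQ a S = ∏ p ∈ S.offDiag, (a p.1 - a p.2) := by
  rw [vandermondeQ, show S.offDiag = (S ×ˢ S).filter (fun p => p.1 ≠ p.2) from by
    ext p; simp [Finset.mem_offDiag, and_assoc], Finset.prod_filter, Finset.prod_product]
  refine Finset.prod_congr rfl fun l hl => ?_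
  rw [← Finset.prod_filter]
  congr 1
  ext j
  simp [ne_comm, and_comm, Finset.mem_erase]

/-- `Q(A ∪ B) · Q(A ∩ B) = Q(A) · Q(B) · ∏_{A\B × B\A} (a l − a j) ·
∏_{B\A × A\B} (a l − a j)`. -/
theorem vandermondeQ_union_mul_inter {W : Type*} [Fintype W] [DecidableEq W]
    {R : Type*} [CommRing R] (a : W → R) (A B : Finset W) :
    vandermondeQ a (A ∪ B) * vandermondeQ a (A ∩ B)
      = vandermondeQ a A * vandermondeQ a B
          * (∏ l ∈ A \ B, ∏ j ∈ B \ A, (a l - a j))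
          * (∏ l ∈ B \ A, ∏ j ∈ A \ B, (a l - a j)) := by
  simp only [vandermondeQ_eq_offDiag, ← Finset.prod_product']
  have hu : (A ∪ B).offDiag =
      (A.offDiag ∪ B.offDiag) ∪ (((A \ B) ×ˢ (B \ A)) ∪ ((B \ A) ×ˢ (A \ B))) := by
    ext ⟨x, y⟩
    simp only [Finset.mem_offDiag, Finset.mem_union, Finset.mem_product, Finset.mem_sdiff]
    constructor
    · rintro ⟨hx, hy, hxy⟩
      by_cases hxA : x ∈ A
      · by_cases hyA : y ∈ A
        · exact Or.inl (Or.inl ⟨hxA, hyA, hxy⟩)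
        · have hyB : y ∈ B := hy.resolve_left hyA
          by_cases hxB : x ∈ B
          · exact Or.inl (Or.inr ⟨hxB, hyB, hxy⟩)
          · exact Or.inr (Or.inl ⟨⟨hxA, hxB⟩, hyB, hyA⟩)
      · have hxB : x ∈ B := hx.resolve_left hxA
        by_cases hyB : y ∈ B
        · exact Or.inl (Or.inr ⟨hxB, hyB, hxy⟩)
        · have hyA : y ∈ A := hy.resolve_right hyB
          exact Or.inr (Or.inr ⟨⟨hxB, hxA⟩, hyA, hyB⟩)
    · rintro ((⟨hx, hy, hxy⟩ | ⟨hx, hy, hxy⟩) | (⟨⟨hx, _⟩, hy, hyA⟩ | ⟨⟨hx, _⟩, hy, hyB⟩))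
      · exact ⟨Or.inl hx, Or.inl hy, hxy⟩
      · exact ⟨Or.inr hx, Or.inr hy, hxy⟩
      · exact ⟨Or.inl hx, Or.inr hy, fun he => hyA (he ▸ hx)⟩
      · exact ⟨Or.inr hx, Or.inl hy, fun he => hyB (he ▸ hx)⟩
  have hi : A.offDiag ∩ B.offDiag = (A ∩ B).offDiag := by
    ext ⟨x, y⟩
    simp only [Finset.mem_offDiag, Finset.mem_inter]
    tauto
  have hd1 : Disjoint (A.offDiag ∪ B.offDiag)
      (((A \ B) ×ˢ (B \ A)) ∪ ((B \ A) ×ˢ (A \ B))) := by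
    rw [Finset.disjoint_left]
    rintro ⟨x, y⟩ h h'
    simp only [Finset.mem_offDiag, Finset.mem_union, Finset.mem_product,
      Finset.mem_sdiff] at h h'
    tauto
  have hd2 : Disjoint ((A \ B) ×ˢ (B \ A)) ((B \ A) ×ˢ (A \ B)) := by
    rw [Finset.disjoint_left]
    rintro ⟨x, y⟩ h h'
    simp only [Finset.mem_product, Finset.mem_sdiff] at h h'
    tauto
  rw [hu, Finset.prod_union hd1, Finset.prod_union hd2, ← hi]
  rw [mul_right_comm, Finset.prod_union_inter]
  ring
end

section
/- Let W be a type and A, B : Finset W. For every l, j ∈ W one has d(χ_A(l) − χ_A(j), χ_B(l) − χ_B(j)) = d(χ_{A∪B}(l) − χ_{A∪B}(j), χ_{A∩B}(l) − χ_{A∩B}(j)) + ε(l,j), where ε(l,j) = 1 if (l ∈ A \ B and j ∈ B \ A) or (l ∈ B \ A and j ∈ A \ B), and ε(l,j) = 0 otherwise. -/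
/-- `d(u, v) = min(|u|, |v|)` if `u` and `v` have strictly opposite signs, and
`0` otherwise. -/
def dExp (u v : ℤ) : ℕ := if u * v < 0 then min u.natAbs v.natAbs else 0

/-- The `ℤ`-valued indicator function of a Finset. -/
def chi {W : Type*} [DecidableEq W] (S : Finset W) (p : W) : ℤ :=
  if p ∈ S then 1 else 0

/-- For each pair `(l, j)`, the exponent `d` for `(A, B)` exceeds the one for
`(A ∪ B, A ∩ B)` by `1` exactly when `(l, j) ∈ (A\B) × (B\A) ∪ (B\A) × (A\B)`. -/
theorem dExp_chi_union_inter {W : Type*} [DecidableEq W] (A B : Finset W)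
    (l j : W) :
    dExp (chi A l - chi A j) (chi B l - chi B j)
      = dExp (chi (A ∪ B) l - chi (A ∪ B) j) (chi (A ∩ B) l - chi (A ∩ B) j)
        + (if (l ∈ A \ B ∧ j ∈ B \ A) ∨ (l ∈ B \ A ∧ j ∈ A \ B) then 1 else 0) := by
  simp only [dExp, chi, Finset.mem_union, Finset.mem_inter, Finset.mem_sdiff]
  by_cases h1 : l ∈ A <;> by_cases h2 : l ∈ B <;> by_cases h3 : j ∈ A <;>
    by_cases h4 : j ∈ B <;> simp [h1, h2, h3, h4]
end

section
/- Let W₁, W₂ be types, A₁, B₁ : Finset W₁ and A₂, B₂ : Finset W₂. For every l ∈ W₁ and j ∈ W₂ one has d(χ_{A₁}(l) − χ_{A₂}(j), χ_{B₁}(l) − χ_{B₂}(j)) = d(χ_{A₁∪B₁}(l) − χ_{A₂∪B₂}(j), χ_{A₁∩B₁}(l) − χ_{A₂∩B₂}(j)) + ε(l,j), where ε(l,j) = 1 if (l ∈ A₁ \ B₁ and j ∈ B₂ \ A₂) or (l ∈ B₁ \ A₁ and j ∈ A₂ \ B₂), and ε(l,j) = 0 otherwise. -/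
/-- Two-vertex version: for each pair `(l, j)` with `l ∈ W₁`, `j ∈ W₂`, the
exponent `d` for `(A, B)` exceeds the one for `(A ∪ B, A ∩ B)` by `1` exactly
when `(l ∈ A₁\B₁ ∧ j ∈ B₂\A₂)` or `(l ∈ B₁\A₁ ∧ j ∈ A₂\B₂)`. -/
theorem dExp_chi_union_inter_two {W₁ W₂ : Type*} [DecidableEq W₁] [DecidableEq W₂]
    (A₁ B₁ : Finset W₁) (A₂ B₂ : Finset W₂) (l : W₁) (j : W₂) :
    dExp (chi A₁ l - chi A₂ j) (chi B₁ l - chi B₂ j)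
      = dExp (chi (A₁ ∪ B₁) l - chi (A₂ ∪ B₂) j)
            (chi (A₁ ∩ B₁) l - chi (A₂ ∩ B₂) j)
        + (if (l ∈ A₁ \ B₁ ∧ j ∈ B₂ \ A₂) ∨ (l ∈ B₁ \ A₁ ∧ j ∈ A₂ \ B₂)
            then 1 else 0) := by
  simp only [chi, Finset.mem_union, Finset.mem_inter, Finset.mem_sdiff]
  by_cases h1 : l ∈ A₁ <;> by_cases h2 : l ∈ B₁ <;> by_cases h3 : j ∈ A₂ <;> by_cases h4 : j ∈ B₂ <;>
    simp [h1, h2, h3, h4, dExp]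
end

section
/- Let I be a finite type, n : I → ℕ, m : I → I → ℕ, F a field, and a : (Σ i : I, Fin (n i)) → F an injective function. For A, B : ∀ i, Finset (Fin (n i)), define componentwise A ∪ B and A ∩ B. Then fc(A, B) · Eu(A ∪ B) · Eu(A ∩ B) · L(A ∪ B) · L(A ∩ B) = fc(A ∪ B, A ∩ B) · Eu(A) · Eu(B) · L(A) · L(B), where fc, Eu, L are defined in the context. -/
/-- The Coulomb-branch structure constant
`fc(A,B) = ∏_{i,i'} ∏_{l,j} (a(i,l) − a(i',j)) ^ (m i i' · d(χ_{A i} l − χ_{A i'} j, χ_{B i} l − χ_{B i'} j))`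
for a quiver with vertex set `I` and `m i i'` arrows from `i` to `i'`. -/
def fcQ {I : Type*} [Fintype I] (n : I → ℕ) (m : I → I → ℕ) {F : Type*} [Field F]
    (a : (Σ i : I, Fin (n i)) → F) (A B : ∀ i, Finset (Fin (n i))) : F :=
  ∏ i : I, ∏ i' : I, ∏ l : Fin (n i), ∏ j : Fin (n i'),
    (a ⟨i, l⟩ - a ⟨i', j⟩) ^
      (m i i' * dExp (chi (A i) l - chi (A i') j) (chi (B i) l - chi (B i') j))

/-- The equivariant Euler factor
`Eu(A) = ∏_i ∏_{j ∈ A i} ∏_{l ∉ A i} (a(i,j) − a(i,l))`. -/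
def euQ {I : Type*} [Fintype I] (n : I → ℕ) {F : Type*} [Field F]
    (a : (Σ i : I, Fin (n i)) → F) (A : ∀ i, Finset (Fin (n i))) : F :=
  ∏ i : I, ∏ j ∈ A i, ∏ l ∈ (A i)ᶜ, (a ⟨i, j⟩ - a ⟨i, l⟩)

/-- The locality factor
`L(A) = ∏_{i ≠ i'} ∏_{l ∈ A i} ∏_{j ∈ A i'} (a(i,l) − a(i',j)) ^ (−m i i') ·
∏_i ∏_{l ∈ A i} ∏_{j ∈ A i, j ≠ l} (a(i,l) − a(i,j)) ^ (1 − m i i)`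
(integer powers taken in the field `F`). -/
def locQ {I : Type*} [Fintype I] [DecidableEq I] (n : I → ℕ) (m : I → I → ℕ)
    {F : Type*} [Field F] (a : (Σ i : I, Fin (n i)) → F)
    (A : ∀ i, Finset (Fin (n i))) : F :=
  (∏ i : I, ∏ i' ∈ Finset.univ.erase i, ∏ l ∈ A i, ∏ j ∈ A i',
      (a ⟨i, l⟩ - a ⟨i', j⟩) ^ (-(m i i' : ℤ))) *
    ∏ i : I, ∏ l ∈ A i, ∏ j ∈ (A i).erase l,
      (a ⟨i, l⟩ - a ⟨i, j⟩) ^ ((1 : ℤ) - (m i i : ℤ))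


section KeyAux

open Finset

variable {F : Type*} [Field F]

private lemma prod_mem_expand {α : Type*} [Fintype α] [DecidableEq α] {M : Type*} [CommMonoid M]
    (S : Finset α) (f : α → M) :
    ∏ l ∈ S, f l = ∏ l : α, if l ∈ S then f l else 1 := by
  simp [Finset.prod_ite_mem]

private lemma prod2_expand_zpow {α β : Type*} [Fintype α] [Fintype β] [DecidableEq α]
    [DecidableEq β] (S : Finset α) (T : α → Finset β) (c : α → β → F) (e : ℤ) :
    (∏ l ∈ S, ∏ j ∈ T l, c l j ^ e)
      = ∏ l : α, ∏ j : β, c l j ^ (if l ∈ S ∧ j ∈ T l then e else 0) := by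
  rw [prod_mem_expand S]
  refine Finset.prod_congr rfl fun l _ => ?_
  by_cases hl : l ∈ S
  · simp only [hl, if_true, true_and]
    rw [prod_mem_expand (T l)]
    refine Finset.prod_congr rfl fun j _ => ?_
    by_cases hj : j ∈ T l <;> simp [hj]
  · simp [hl]

private lemma five_zpow (c : F) (hc : c ≠ 0) (e1 e2 e3 e4 e5 : ℤ) :
    c ^ e1 * c ^ e2 * c ^ e3 * c ^ e4 * c ^ e5 = c ^ (e1 + e2 + e3 + e4 + e5) := by
  rw [← zpow_add₀ hc, ← zpow_add₀ hc, ← zpow_add₀ hc, ← zpow_add₀ hc]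

private lemma crossExpEq {α β : Type*} [DecidableEq α] [DecidableEq β] (M : ℕ)
    (A1 B1 : Finset α) (A2 B2 : Finset β) (l : α) (j : β) :
    (M : ℤ) * (dExp (chi A1 l - chi A2 j) (chi B1 l - chi B2 j) : ℤ)
      + (if l ∈ A1 ∪ B1 ∧ j ∈ A2 ∪ B2 then -(M:ℤ) else 0)
      + (if l ∈ A1 ∩ B1 ∧ j ∈ A2 ∩ B2 then -(M:ℤ) else 0)
    = (M : ℤ) * (dExp (chi (A1 ∪ B1) l - chi (A2 ∪ B2) j)
          (chi (A1 ∩ B1) l - chi (A2 ∩ B2) j) : ℤ)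
      + (if l ∈ A1 ∧ j ∈ A2 then -(M:ℤ) else 0)
      + (if l ∈ B1 ∧ j ∈ B2 then -(M:ℤ) else 0) := by
  by_cases h1 : l ∈ A1 <;> by_cases h2 : l ∈ B1 <;> by_cases h3 : j ∈ A2 <;>
    by_cases h4 : j ∈ B2 <;>
    simp [chi, dExp, h1, h2, h3, h4, Finset.mem_union, Finset.mem_inter] <;> ring

private lemma crossBlock {α β : Type*} [Fintype α] [Fintype β] [DecidableEq α] [DecidableEq β]
    (x : α → F) (y : β → F) (hxy : ∀ l j, x l - y j ≠ 0) (M : ℕ)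
    (A1 B1 : Finset α) (A2 B2 : Finset β) :
    (∏ l : α, ∏ j : β, (x l - y j) ^
        (M * dExp (chi A1 l - chi A2 j) (chi B1 l - chi B2 j)))
      * (∏ l ∈ A1 ∪ B1, ∏ j ∈ A2 ∪ B2, (x l - y j) ^ (-(M:ℤ)))
      * (∏ l ∈ A1 ∩ B1, ∏ j ∈ A2 ∩ B2, (x l - y j) ^ (-(M:ℤ)))
    = (∏ l : α, ∏ j : β, (x l - y j) ^
        (M * dExp (chi (A1 ∪ B1) l - chi (A2 ∪ B2) j) (chi (A1 ∩ B1) l - chi (A2 ∩ B2) j)))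
      * (∏ l ∈ A1, ∏ j ∈ A2, (x l - y j) ^ (-(M:ℤ)))
      * (∏ l ∈ B1, ∏ j ∈ B2, (x l - y j) ^ (-(M:ℤ))) := by
  rw [prod2_expand_zpow A1 (fun _ => A2), prod2_expand_zpow B1 (fun _ => B2),
    prod2_expand_zpow (A1 ∪ B1) (fun _ => A2 ∪ B2),
    prod2_expand_zpow (A1 ∩ B1) (fun _ => A2 ∩ B2)]
  simp only [← zpow_natCast (x _ - y _), ← Finset.prod_mul_distrib]
  refine Finset.prod_congr rfl fun l _ => Finset.prod_congr rfl fun j _ => ?_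
  rw [← zpow_add₀ (hxy l j), ← zpow_add₀ (hxy l j), ← zpow_add₀ (hxy l j),
    ← zpow_add₀ (hxy l j)]
  congr 1
  push_cast
  exact crossExpEq M A1 B1 A2 B2 l j

private lemma diagExpEq {α : Type*} [Fintype α] [DecidableEq α] (M : ℕ) (A B : Finset α)
    (l j : α) (hlj : l ≠ j) :
    (M : ℤ) * (dExp (chi A l - chi A j) (chi B l - chi B j) : ℤ)
      + (if l ∈ A ∪ B ∧ j ∈ (A ∪ B)ᶜ then (1:ℤ) else 0)
      + (if l ∈ A ∩ B ∧ j ∈ (A ∩ B)ᶜ then (1:ℤ) else 0)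
      + (if l ∈ A ∪ B ∧ j ∈ (A ∪ B).erase l then (1:ℤ) - M else 0)
      + (if l ∈ A ∩ B ∧ j ∈ (A ∩ B).erase l then (1:ℤ) - M else 0)
    = (M : ℤ) * (dExp (chi (A ∪ B) l - chi (A ∪ B) j) (chi (A ∩ B) l - chi (A ∩ B) j) : ℤ)
      + (if l ∈ A ∧ j ∈ Aᶜ then (1:ℤ) else 0)
      + (if l ∈ B ∧ j ∈ Bᶜ then (1:ℤ) else 0)
      + (if l ∈ A ∧ j ∈ A.erase l then (1:ℤ) - M else 0)
      + (if l ∈ B ∧ j ∈ B.erase l then (1:ℤ) - M else 0) := by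
  have hjl : j ≠ l := hlj.symm
  by_cases h1 : l ∈ A <;> by_cases h2 : l ∈ B <;> by_cases h3 : j ∈ A <;> by_cases h4 : j ∈ B <;>
    simp [chi, dExp, h1, h2, h3, h4, hjl, Finset.mem_union, Finset.mem_inter,
      Finset.mem_erase, Finset.mem_compl] <;> try ring

set_option maxHeartbeats 2000000 in
private lemma diagBlock {α : Type*} [Fintype α] [DecidableEq α]
    (x : α → F) (hx : ∀ l j : α, l ≠ j → x l - x j ≠ 0) (M : ℕ) (A B : Finset α) :
    (∏ l : α, ∏ j : α, (x l - x j) ^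
        (M * dExp (chi A l - chi A j) (chi B l - chi B j)))
      * (∏ l ∈ A ∪ B, ∏ j ∈ (A ∪ B)ᶜ, (x l - x j))
      * (∏ l ∈ A ∩ B, ∏ j ∈ (A ∩ B)ᶜ, (x l - x j))
      * (∏ l ∈ A ∪ B, ∏ j ∈ (A ∪ B).erase l, (x l - x j) ^ ((1:ℤ) - M))
      * (∏ l ∈ A ∩ B, ∏ j ∈ (A ∩ B).erase l, (x l - x j) ^ ((1:ℤ) - M))
    = (∏ l : α, ∏ j : α, (x l - x j) ^
        (M * dExp (chi (A ∪ B) l - chi (A ∪ B) j) (chi (A ∩ B) l - chi (A ∩ B) j)))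
      * (∏ l ∈ A, ∏ j ∈ Aᶜ, (x l - x j))
      * (∏ l ∈ B, ∏ j ∈ Bᶜ, (x l - x j))
      * (∏ l ∈ A, ∏ j ∈ A.erase l, (x l - x j) ^ ((1:ℤ) - M))
      * (∏ l ∈ B, ∏ j ∈ B.erase l, (x l - x j) ^ ((1:ℤ) - M)) := by
  have h1 : ∀ (S : Finset α), (∏ l ∈ S, ∏ j ∈ Sᶜ, (x l - x j))
      = ∏ l : α, ∏ j : α, (x l - x j) ^ (if l ∈ S ∧ j ∈ Sᶜ then (1:ℤ) else 0) := by
    intro S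
    rw [← prod2_expand_zpow S (fun _ => Sᶜ) (fun l j => x l - x j) 1]
    simp
  rw [h1, h1, h1, h1,
    prod2_expand_zpow (A ∪ B) (fun l => (A ∪ B).erase l) (fun l j => x l - x j),
    prod2_expand_zpow (A ∩ B) (fun l => (A ∩ B).erase l) (fun l j => x l - x j),
    prod2_expand_zpow A (fun l => A.erase l) (fun l j => x l - x j),
    prod2_expand_zpow B (fun l => B.erase l) (fun l j => x l - x j)]
  simp only [← zpow_natCast (x _ - x _), ← Finset.prod_mul_distrib]
  refine Finset.prod_congr rfl fun l _ => Finset.prod_congr rfl fun j _ => ?_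
  by_cases hlj : l = j
  · subst hlj
    by_cases hA : l ∈ A <;> by_cases hB : l ∈ B <;>
      simp [chi, dExp, hA, hB, Finset.mem_erase, Finset.mem_compl,
        Finset.mem_union, Finset.mem_inter]
  · rw [five_zpow _ (hx l j hlj), five_zpow _ (hx l j hlj)]
    congr 1
    push_cast
    exact diagExpEq M A B l j hlj

private lemma prod_split_diag {I : Type*} [Fintype I] [DecidableEq I] (g : I → I → F) :
    ∏ i : I, ∏ i' : I, g i i'
      = (∏ i : I, g i i) * ∏ i : I, ∏ i' ∈ Finset.univ.erase i, g i i' := by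
  rw [← Finset.prod_mul_distrib]
  exact Finset.prod_congr rfl fun i _ =>
    (Finset.mul_prod_erase univ (g i) (Finset.mem_univ i)).symm

end KeyAux

/-- The key identity matching, for an arbitrary quiver, the structure constants
of the Coulomb-branch Rees algebra (`fc` and the Euler factors `Eu`) with the
locality factors `L` of the Mirković local projective space:
`fc(A,B) · Eu(A∪B) · Eu(A∩B) · L(A∪B) · L(A∩B)
  = fc(A∪B, A∩B) · Eu(A) · Eu(B) · L(A) · L(B)`. -/
theorem fc_eu_loc_union_inter {I : Type*} [Fintype I] [DecidableEq I]
    (n : I → ℕ) (m : I → I → ℕ) {F : Type*} [Field F]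
    (a : (Σ i : I, Fin (n i)) → F) (ha : Function.Injective a)
    (A B : ∀ i, Finset (Fin (n i))) :
    fcQ n m a A B * euQ n a (fun i => A i ∪ B i) * euQ n a (fun i => A i ∩ B i)
        * locQ n m a (fun i => A i ∪ B i) * locQ n m a (fun i => A i ∩ B i)
      = fcQ n m a (fun i => A i ∪ B i) (fun i => A i ∩ B i)
          * euQ n a A * euQ n a B * locQ n m a A * locQ n m a B := by
  classical
  have hne : ∀ (i i' : I) (l : Fin (n i)) (j : Fin (n i')),
      (⟨i, l⟩ : Σ i, Fin (n i)) ≠ ⟨i', j⟩ → a ⟨i, l⟩ - a ⟨i', j⟩ ≠ 0 :=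
    fun i i' l j h => sub_ne_zero_of_ne (fun e => h (ha e))
  -- cross equality
  have hCross : (∏ i : I, ∏ i' ∈ Finset.univ.erase i,
        ((∏ l : Fin (n i), ∏ j : Fin (n i'),
          (a ⟨i, l⟩ - a ⟨i', j⟩) ^
            (m i i' * dExp (chi (A i) l - chi (A i') j) (chi (B i) l - chi (B i') j)))
        * (∏ l ∈ A i ∪ B i, ∏ j ∈ A i' ∪ B i',
            (a ⟨i, l⟩ - a ⟨i', j⟩) ^ (-(m i i' : ℤ)))
        * (∏ l ∈ A i ∩ B i, ∏ j ∈ A i' ∩ B i',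
            (a ⟨i, l⟩ - a ⟨i', j⟩) ^ (-(m i i' : ℤ)))))
      = ∏ i : I, ∏ i' ∈ Finset.univ.erase i,
        ((∏ l : Fin (n i), ∏ j : Fin (n i'),
          (a ⟨i, l⟩ - a ⟨i', j⟩) ^
            (m i i' * dExp (chi (A i ∪ B i) l - chi (A i' ∪ B i') j)
              (chi (A i ∩ B i) l - chi (A i' ∩ B i') j)))
        * (∏ l ∈ A i, ∏ j ∈ A i', (a ⟨i, l⟩ - a ⟨i', j⟩) ^ (-(m i i' : ℤ)))
        * (∏ l ∈ B i, ∏ j ∈ B i', (a ⟨i, l⟩ - a ⟨i', j⟩) ^ (-(m i i' : ℤ)))) := by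
    refine Finset.prod_congr rfl fun i _ => Finset.prod_congr rfl fun i' hi' => ?_
    have hii' : i' ≠ i := (Finset.mem_erase.mp hi').1
    exact crossBlock (fun l => a ⟨i, l⟩) (fun j => a ⟨i', j⟩)
      (fun l j => hne i i' l j (by simp [hii'.symm])) (m i i') (A i) (B i) (A i') (B i')
  -- diag equality
  have hDiag : (∏ i : I,
        ((∏ l : Fin (n i), ∏ j : Fin (n i),
          (a ⟨i, l⟩ - a ⟨i, j⟩) ^
            (m i i * dExp (chi (A i) l - chi (A i) j) (chi (B i) l - chi (B i) j)))
        * (∏ l ∈ A i ∪ B i, ∏ j ∈ (A i ∪ B i)ᶜ, (a ⟨i, l⟩ - a ⟨i, j⟩))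
        * (∏ l ∈ A i ∩ B i, ∏ j ∈ (A i ∩ B i)ᶜ, (a ⟨i, l⟩ - a ⟨i, j⟩))
        * (∏ l ∈ A i ∪ B i, ∏ j ∈ (A i ∪ B i).erase l,
            (a ⟨i, l⟩ - a ⟨i, j⟩) ^ ((1:ℤ) - (m i i : ℤ)))
        * (∏ l ∈ A i ∩ B i, ∏ j ∈ (A i ∩ B i).erase l,
            (a ⟨i, l⟩ - a ⟨i, j⟩) ^ ((1:ℤ) - (m i i : ℤ)))))
      = ∏ i : I,
        ((∏ l : Fin (n i), ∏ j : Fin (n i),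
          (a ⟨i, l⟩ - a ⟨i, j⟩) ^
            (m i i * dExp (chi (A i ∪ B i) l - chi (A i ∪ B i) j)
              (chi (A i ∩ B i) l - chi (A i ∩ B i) j)))
        * (∏ l ∈ A i, ∏ j ∈ (A i)ᶜ, (a ⟨i, l⟩ - a ⟨i, j⟩))
        * (∏ l ∈ B i, ∏ j ∈ (B i)ᶜ, (a ⟨i, l⟩ - a ⟨i, j⟩))
        * (∏ l ∈ A i, ∏ j ∈ (A i).erase l, (a ⟨i, l⟩ - a ⟨i, j⟩) ^ ((1:ℤ) - (m i i : ℤ)))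
        * (∏ l ∈ B i, ∏ j ∈ (B i).erase l, (a ⟨i, l⟩ - a ⟨i, j⟩) ^ ((1:ℤ) - (m i i : ℤ)))) := by
    refine Finset.prod_congr rfl fun i _ => ?_
    exact diagBlock (fun l => a ⟨i, l⟩)
      (fun l j hlj => hne i i l j (by simp [hlj])) (m i i) (A i) (B i)
  unfold fcQ euQ locQ
  beta_reduce
  rw [prod_split_diag (fun i i' => ∏ l : Fin (n i), ∏ j : Fin (n i'),
      (a ⟨i, l⟩ - a ⟨i', j⟩) ^
        (m i i' * dExp (chi (A i) l - chi (A i') j) (chi (B i) l - chi (B i') j))),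
    prod_split_diag (fun i i' => ∏ l : Fin (n i), ∏ j : Fin (n i'),
      (a ⟨i, l⟩ - a ⟨i', j⟩) ^
        (m i i' * dExp (chi (A i ∪ B i) l - chi (A i' ∪ B i') j)
          (chi (A i ∩ B i) l - chi (A i' ∩ B i') j)))]
  simp only [Finset.prod_mul_distrib] at hCross hDiag
  have h := congrArg₂ (· * ·) hCross hDiag
  linear_combination h
end
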